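/- If a > 0 and a•μ_p ≤ μ_u does not hold, then ∫_X min(a·r(x), 1) dμ_u(x) < a; that is, D(a) > 0 for every invalid mixing proportion a (clipping strictly decreases the expected posterior below the prior). -/

import Mathlib

open MeasureTheory ENNReal

/-- Second part of the proof of the paper's Lemma 2: for every invalid mixing
proportion `a` (i.e. `a > 0` such that `a • μp ≤ μu` fails), clipping strictly
decreases the expected posterior below the prior: `∫ min (a * r x) 1 ∂μu < a`,
i.e. `D a > 0`, where `r` is the real-valued Radon–Nikodym derivative. -/
theorem D_pos_of_invalid_prior {X : Type*} [MeasurableSpace X]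
    (μp μu : Measure X) [IsProbabilityMeasure μp] [IsProbabilityMeasure μu]
    (hac : μp ≪ μu) (r : X → ℝ) (hr : r = fun x => (μp.rnDeriv μu x).toReal)
    (a : ℝ) (ha : 0 < a) (hnle : ¬ ENNReal.ofReal a • μp ≤ μu) :
    ∫ x, min (a * r x) 1 ∂μu < a := by
  have hrmeas : Measurable r := by
    rw [hr]; exact (μp.measurable_rnDeriv μu).ennreal_toReal
  have hrnn : ∀ x, 0 ≤ r x := by rw [hr]; exact fun x => ENNReal.toReal_nonneg
  -- the set where clipping occurs has positive measure
  have hE : μu {x | 1 < a * r x} ≠ 0 := by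
    intro h0
    apply hnle
    have hae : ∀ᵐ x ∂μu, a * r x ≤ 1 := by
      rw [ae_iff]
      simpa using h0
    have hlt : ∀ᵐ x ∂μu, μp.rnDeriv μu x < ∞ := μp.rnDeriv_lt_top μu
    have hae' : ∀ᵐ x ∂μu, ENNReal.ofReal a * μp.rnDeriv μu x ≤ 1 := by
      filter_upwards [hae, hlt] with x hx hxlt
      have : μp.rnDeriv μu x = ENNReal.ofReal (r x) := by
        rw [hr]; simp [ENNReal.ofReal_toReal hxlt.ne]
      rw [this, ← ENNReal.ofReal_mul ha.le, ← ENNReal.ofReal_one]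
      exact ENNReal.ofReal_le_ofReal hx
    calc ENNReal.ofReal a • μp
        = ENNReal.ofReal a • μu.withDensity (μp.rnDeriv μu) := by
          rw [Measure.withDensity_rnDeriv_eq _ _ hac]
      _ = μu.withDensity (fun x => ENNReal.ofReal a * μp.rnDeriv μu x) := by
          rw [← withDensity_smul _ (μp.measurable_rnDeriv μu)]; rfl
      _ ≤ μu.withDensity (fun _ => 1) := withDensity_mono hae'
      _ = μu := by simp
  have hg : Integrable (fun x => a * r x) μu := by
    rw [hr]
    exact (Measure.integrable_toReal_rnDeriv).const_mul a
  have hf : Integrable (fun x => min (a * r x) 1) μu := by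
    refine hg.mono ((hrmeas.const_mul a).min measurable_const).aestronglyMeasurable ?_
    refine Filter.Eventually.of_forall fun x => ?_
    rw [Real.norm_eq_abs, Real.norm_eq_abs, abs_of_nonneg (le_min (mul_nonneg ha.le (hrnn x)) one_pos.le),
      abs_of_nonneg (mul_nonneg ha.le (hrnn x))]
    exact min_le_left _ _
  have hint : ∫ x, a * r x ∂μu = a := by
    simp only [hr, integral_const_mul, Measure.integral_toReal_rnDeriv hac,
      measure_univ, ENNReal.toReal_one, probReal_univ, mul_one]
  have hdiff : 0 < ∫ x, (a * r x - min (a * r x) 1) ∂μu := by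
    have hint2 : Integrable (fun x => a * r x - min (a * r x) 1) μu := hg.sub hf
    rw [integral_pos_iff_support_of_nonneg_ae
      (Filter.Eventually.of_forall fun x => sub_nonneg.2 (min_le_left (a * r x) 1)) hint2]
    refine lt_of_lt_of_le (pos_iff_ne_zero.2 hE) (measure_mono ?_)
    intro x hx
    simp only [Set.mem_setOf_eq] at hx
    simp only [Function.mem_support]
    have : min (a * r x) 1 = 1 := min_eq_right hx.le
    rw [this]
    exact sub_ne_zero.2 hx.ne'
  rw [integral_sub hg hf, hint] at hdiff
  clear hnle
  linarith
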